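/- Fix a codeword x ∈ C and a received pair vector ŷ ∈ (Σ²)^n; set λ = Λ(ŷ) and λ⁰ = Λ(ŷ₀). (i) For every feasible (x^f,τ^f) ∈ P(H) with x^f ≠ x there exists a feasible (x^r,τ^r) ∈ P(H) with x^r ≠ 0 and ⟨λ, τ^f − T(x)⟩ = ⟨λ⁰, τ^r − T(0)⟩. (ii) Conversely, for every feasible (x^r,τ^r) ∈ P(H) with x^r ≠ 0 there exists a feasible (x^f,τ^f) ∈ P(H) with x^f ≠ x and ⟨λ⁰, τ^r − T(0)⟩ = ⟨λ, τ^f − T(x)⟩. -/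

import Mathlib

open scoped BigOperators

/-- Symbol pairs: elements of Σ² with Σ = {0,1} represented as `ZMod 2`. -/
abbrev Pair := ZMod 2 × ZMod 2

/-- Cyclic successor index: `i + 1 (mod n)`. -/
def nxt {n : ℕ} (i : Fin n) : Fin n := ⟨(i.val + 1) % n, Nat.mod_lt _ i.pos⟩

/-- Embedding of a binary vector into `ℝ^n`. -/
def emb {n : ℕ} (x : Fin n → ZMod 2) : Fin n → ℝ := fun i => ((x i).val : ℝ)

/-- The binary linear code with parity-check matrix `H`. -/
def code {m n : ℕ} (H : Fin m → Fin n → ZMod 2) : Set (Fin n → ZMod 2) :=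
  {x | ∀ j, ∑ i, H j i * x i = 0}

/-- The local (single parity check) code of row `j` of `H`. -/
def localCode {m n : ℕ} (H : Fin m → Fin n → ZMod 2) (j : Fin m) : Set (Fin n → ZMod 2) :=
  {x | ∑ i, H j i * x i = 0}

/-- The fundamental polytope `Q(H)`: intersection of convex hulls of local codes. -/
def fundPolytope {m n : ℕ} (H : Fin m → Fin n → ZMod 2) : Set (Fin n → ℝ) :=
  ⋂ j, convexHull ℝ (emb '' localCode H j)

/-- The LP feasible region `P(H)` of pairs `(x, τ)`. -/
def feasible {m n : ℕ} (H : Fin m → Fin n → ZMod 2) :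
    Set ((Fin n → ℝ) × (Fin n → Pair → ℝ)) :=
  {xt | (∀ i ab, xt.2 i ab ∈ Set.Icc (0 : ℝ) 1) ∧
        (∀ i, ∑ ab : Pair, xt.2 i ab = 1) ∧
        (∀ i, xt.1 i = xt.2 i (1, 0) + xt.2 i (1, 1)) ∧
        (∀ i, xt.1 (nxt i) = xt.2 i (0, 1) + xt.2 i (1, 1)) ∧
        xt.1 ∈ fundPolytope H}

/-- `T(x)`: the indicator vector of the symbol-pair read vector `π(x)`. -/
def indic {n : ℕ} (x : Fin n → ZMod 2) : Fin n → Pair → ℝ :=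
  fun i ab => if (x i, x (nxt i)) = ab then 1 else 0

/-- Channel transition probability `p(y | a)` of the symbol-pair read channel. -/
noncomputable def chan (p : ℝ) (y a : Pair) : ℝ := if y = a then 1 - p else p / 3

/-- Likelihood `p(ŷ | x)` of the received pair vector `ŷ` given codeword `x`. -/
noncomputable def lik {n : ℕ} (p : ℝ) (y : Fin n → Pair) (x : Fin n → ZMod 2) : ℝ :=
  ∏ i, chan p (y i) (x i, x (nxt i))

/-- The cost vector `λ = Λ(ŷ)`, `λ_{i,(a,b)} = -ln p(ŷ_i | (a,b))`. -/
noncomputable def Lam {n : ℕ} (p : ℝ) (y : Fin n → Pair) : Fin n → Pair → ℝ :=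
  fun i ab => -Real.log (chan p (y i) ab)

/-- The pairing `⟨λ, τ⟩ = Σ_i Σ_{(a,b)} λ_{i,(a,b)} τ_{i,(a,b)}`. -/
def innerP {n : ℕ} (l t : Fin n → Pair → ℝ) : ℝ := ∑ i, ∑ ab : Pair, l i ab * t i ab

/-- The fractional pair weight `W_fp`. -/
def Wfp {n : ℕ} (x : Fin n → ℝ) : ℝ := ∑ i, max (x i) (x (nxt i))

/-- The set `B(x)` of received vectors causing LP decoding failure when `x` was sent. -/
def Bset {m n : ℕ} (H : Fin m → Fin n → ZMod 2) (p : ℝ) (x : Fin n → ZMod 2) :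
    Set (Fin n → Pair) :=
  {y | ∃ xt ∈ feasible H, xt.1 ≠ emb x ∧ innerP (Lam p y) xt.2 ≤ innerP (Lam p y) (indic x)}



/-! ### Auxiliary machinery: the flip map relative to a codeword -/

private lemma zmod2_cases (a : ZMod 2) : a = 0 ∨ a = 1 := by revert a; decide

private lemma sum_pair (f : Pair → ℝ) :
    ∑ ab : Pair, f ab = f (0,0) + f (0,1) + f (1,0) + f (1,1) := by
  rw [Fintype.sum_prod_type]
  show ∑ a : Fin 2, ∑ b : Fin 2, f (a, b) = _
  simp [Fin.sum_univ_two]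
  ring_nf
  rfl

private lemma val_zero2 : (0 : ZMod 2).val = 0 := rfl
private lemma val_one2 : (1 : ZMod 2).val = 1 := rfl

/-- Flip real coordinates on the support of a binary vector `c`. -/
def flipR {n : ℕ} (c : Fin n → ZMod 2) (v : Fin n → ℝ) : Fin n → ℝ :=
  fun i => if c i = 0 then v i else 1 - v i

/-- Shift the τ-variables by the pair read vector of `c`. -/
def shiftT {n : ℕ} (c : Fin n → ZMod 2) (t : Fin n → Pair → ℝ) : Fin n → Pair → ℝ :=
  fun i ab => t i (ab + (c i, c (nxt i)))

private lemma pair_self_add {n : ℕ} (c : Fin n → ZMod 2) (i : Fin n) :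
    ((c i, c (nxt i)) : Pair) + (c i, c (nxt i)) = 0 := by
  rcases zmod2_cases (c i) with h1 | h1 <;> rcases zmod2_cases (c (nxt i)) with h2 | h2 <;>
    rw [h1, h2] <;> decide

private lemma flipR_flipR {n : ℕ} (c : Fin n → ZMod 2) (v : Fin n → ℝ) :
    flipR c (flipR c v) = v := by
  funext i; simp only [flipR]; split_ifs <;> ring

private lemma shiftT_shiftT {n : ℕ} (c : Fin n → ZMod 2) (t : Fin n → Pair → ℝ) :
    shiftT c (shiftT c t) = t := by
  funext i ab
  simp only [shiftT]
  rw [add_assoc, pair_self_add, add_zero]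

private lemma emb_val (a b : ZMod 2) :
    (if b = 0 then ((a.val : ℕ) : ℝ) else 1 - ((a.val : ℕ) : ℝ)) = (((a + b).val : ℕ) : ℝ) := by
  rcases zmod2_cases a with ha | ha <;> rcases zmod2_cases b with hb | hb <;>
      subst ha <;> subst hb
  · rw [if_pos rfl, add_zero]
  · rw [if_neg (by decide), show ((0:ZMod 2) + 1) = 1 from by decide, val_zero2, val_one2]
    norm_num
  · rw [if_pos rfl, add_zero]
  · rw [if_neg (by decide), show ((1:ZMod 2) + 1) = 0 from by decide, val_zero2, val_one2]
    norm_num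

private lemma flipR_emb {n : ℕ} (c z : Fin n → ZMod 2) :
    flipR c (emb z) = emb (z + c) := by
  funext i
  show (if c i = 0 then (((z i).val : ℕ) : ℝ) else 1 - (((z i).val : ℕ) : ℝ))
      = (((z i + c i).val : ℕ) : ℝ)
  exact emb_val (z i) (c i)

private lemma flipR_emb_self {n : ℕ} (c : Fin n → ZMod 2) :
    flipR c (emb c) = 0 := by
  funext i
  show (if c i = 0 then (((c i).val : ℕ) : ℝ) else 1 - (((c i).val : ℕ) : ℝ)) = 0
  rw [emb_val (c i) (c i)]
  have hcc : c i + c i = 0 := by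
    rcases zmod2_cases (c i) with h | h <;> rw [h] <;> decide
  rw [hcc, val_zero2]
  norm_num

private lemma flipR_zero {n : ℕ} (c : Fin n → ZMod 2) :
    flipR c 0 = emb c := by
  funext i
  show (if c i = 0 then (0:ℝ) else 1 - (0:ℝ)) = (((c i).val : ℕ) : ℝ)
  rcases zmod2_cases (c i) with h | h <;> rw [h]
  · rw [if_pos rfl, val_zero2]; norm_num
  · rw [if_neg (by decide), val_one2]; norm_num

/-- `flipR c` as an affine map. -/
noncomputable def flipAff {n : ℕ} (c : Fin n → ZMod 2) : (Fin n → ℝ) →ᵃ[ℝ] (Fin n → ℝ) where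
  toFun := flipR c
  linear := LinearMap.pi (fun i => if c i = 0 then LinearMap.proj i else -LinearMap.proj i)
  map_vadd' := by
    intro q v
    funext i
    simp only [vadd_eq_add, Pi.add_apply, flipR, LinearMap.pi_apply]
    split_ifs with h <;>
      simp only [LinearMap.neg_apply, LinearMap.proj_apply] <;> ring

private lemma flipAff_apply {n : ℕ} (c : Fin n → ZMod 2) (v : Fin n → ℝ) :
    flipAff c v = flipR c v := rfl

private lemma localCode_add {m n : ℕ} {H : Fin m → Fin n → ZMod 2} {j : Fin m}
    {z c : Fin n → ZMod 2} (hz : z ∈ localCode H j) (hc : c ∈ localCode H j) :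
    z + c ∈ localCode H j := by
  simp only [localCode, Set.mem_setOf_eq] at *
  calc ∑ i, H j i * (z + c) i = (∑ i, H j i * z i) + ∑ i, H j i * c i := by
        rw [← Finset.sum_add_distrib]; congr 1; funext i; simp [Pi.add_apply]; ring
    _ = 0 := by rw [hz, hc, add_zero]

private lemma image_local {m n : ℕ} {H : Fin m → Fin n → ZMod 2} {j : Fin m}
    {c : Fin n → ZMod 2} (hc : c ∈ localCode H j) :
    flipR c '' (emb '' localCode H j) = emb '' localCode H j := by
  apply Set.Subset.antisymm
  · rintro _ ⟨_, ⟨z, hz, rfl⟩, rfl⟩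
    exact ⟨z + c, localCode_add hz hc, (flipR_emb c z).symm⟩
  · rintro _ ⟨z, hz, rfl⟩
    refine ⟨emb (z + c), ⟨z + c, localCode_add hz hc, rfl⟩, ?_⟩
    rw [← flipR_emb, flipR_flipR]

private lemma flipR_mem_Q {m n : ℕ} {H : Fin m → Fin n → ZMod 2}
    {c : Fin n → ZMod 2} (hc : ∀ j, c ∈ localCode H j) {v : Fin n → ℝ}
    (hv : v ∈ fundPolytope H) : flipR c v ∈ fundPolytope H := by
  simp only [fundPolytope, Set.mem_iInter] at hv ⊢
  intro j
  have h1 : flipR c v ∈ flipAff c '' (convexHull ℝ (emb '' localCode H j)) :=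
    ⟨v, hv j, rfl⟩
  rw [AffineMap.image_convexHull] at h1
  have h2 : ⇑(flipAff c) '' (emb '' localCode H j) = emb '' localCode H j := by
    have h3 : ⇑(flipAff c) = flipR c := rfl
    rw [h3]
    exact image_local (hc j)
  rwa [h2] at h1

private lemma feas_map {m n : ℕ} {H : Fin m → Fin n → ZMod 2}
    {c : Fin n → ZMod 2} (hc : ∀ j, c ∈ localCode H j)
    {xf : Fin n → ℝ} {tf : Fin n → Pair → ℝ} (hf : (xf, tf) ∈ feasible H) :
    (flipR c xf, shiftT c tf) ∈ feasible H := by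
  obtain ⟨hb, hs, h1, h2, hQ⟩ := hf
  have hsum : ∀ i : Fin n, tf i (0,0) + tf i (0,1) + tf i (1,0) + tf i (1,1) = 1 := by
    intro i; rw [← sum_pair]; exact hs i
  have e1 : ∀ i : Fin n, xf i = tf i (1,0) + tf i (1,1) := h1
  have e2 : ∀ i : Fin n, xf (nxt i) = tf i (0,1) + tf i (1,1) := h2
  refine ⟨fun i ab => hb i _, ?_, ?_, ?_, flipR_mem_Q hc hQ⟩
  · intro i
    rw [← hs i]
    exact Fintype.sum_equiv (Equiv.addRight ((c i, c (nxt i)) : Pair))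
      (fun ab => shiftT c tf i ab) (fun ab => tf i ab) (fun ab => rfl)
  · intro i
    show (if c i = 0 then xf i else 1 - xf i)
        = tf i ((1,0) + (c i, c (nxt i))) + tf i ((1,1) + (c i, c (nxt i)))
    rcases zmod2_cases (c i) with ha | ha <;> rcases zmod2_cases (c (nxt i)) with hb' | hb' <;>
        rw [ha, hb']
    · rw [if_pos rfl, show ((1:ZMod 2),(0:ZMod 2)) + (0,0) = (1,0) from by decide,
        show ((1:ZMod 2),(1:ZMod 2)) + (0,0) = (1,1) from by decide]
      exact e1 i
    · rw [if_pos rfl, show ((1:ZMod 2),(0:ZMod 2)) + (0,1) = (1,1) from by decide,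
        show ((1:ZMod 2),(1:ZMod 2)) + (0,1) = (1,0) from by decide]
      linarith [e1 i]
    · rw [if_neg (by decide), show ((1:ZMod 2),(0:ZMod 2)) + (1,0) = (0,0) from by decide,
        show ((1:ZMod 2),(1:ZMod 2)) + (1,0) = (0,1) from by decide]
      linarith [e1 i, hsum i]
    · rw [if_neg (by decide), show ((1:ZMod 2),(0:ZMod 2)) + (1,1) = (0,1) from by decide,
        show ((1:ZMod 2),(1:ZMod 2)) + (1,1) = (0,0) from by decide]
      linarith [e1 i, hsum i]
  · intro i
    show (if c (nxt i) = 0 then xf (nxt i) else 1 - xf (nxt i))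
        = tf i ((0,1) + (c i, c (nxt i))) + tf i ((1,1) + (c i, c (nxt i)))
    rcases zmod2_cases (c i) with ha | ha <;> rcases zmod2_cases (c (nxt i)) with hb' | hb' <;>
        rw [ha, hb']
    · rw [if_pos rfl, show ((0:ZMod 2),(1:ZMod 2)) + (0,0) = (0,1) from by decide,
        show ((1:ZMod 2),(1:ZMod 2)) + (0,0) = (1,1) from by decide]
      exact e2 i
    · rw [if_neg (by decide), show ((0:ZMod 2),(1:ZMod 2)) + (0,1) = (0,0) from by decide,
        show ((1:ZMod 2),(1:ZMod 2)) + (0,1) = (1,0) from by decide]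
      linarith [e2 i, hsum i]
    · rw [if_pos rfl, show ((0:ZMod 2),(1:ZMod 2)) + (1,0) = (1,1) from by decide,
        show ((1:ZMod 2),(1:ZMod 2)) + (1,0) = (0,1) from by decide]
      linarith [e2 i]
    · rw [if_neg (by decide), show ((0:ZMod 2),(1:ZMod 2)) + (1,1) = (1,0) from by decide,
        show ((1:ZMod 2),(1:ZMod 2)) + (1,1) = (0,0) from by decide]
      linarith [e2 i, hsum i]

private lemma chan_shift (p : ℝ) (u v w : Pair) : chan p (u + w) (v + w) = chan p u v := by
  simp only [chan, add_left_inj]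

private lemma inner_shift {n : ℕ} (p : ℝ) (y : Fin n → Pair) (c : Fin n → ZMod 2)
    (t : Fin n → Pair → ℝ) :
    innerP (Lam p y) t
      = innerP (Lam p (fun i => y i + (c i, c (nxt i)))) (shiftT c t) := by
  unfold innerP
  refine Finset.sum_congr rfl (fun i _ => ?_)
  refine Fintype.sum_equiv (Equiv.addRight ((c i, c (nxt i)) : Pair)) _ _ (fun ab => ?_)
  have h1 : Lam p y i ab
      = Lam p (fun i => y i + (c i, c (nxt i))) i (ab + (c i, c (nxt i))) := by
    simp only [Lam]
    rw [chan_shift]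
  have h2 : t i ab = shiftT c t i (ab + (c i, c (nxt i))) := by
    simp only [shiftT]
    rw [add_assoc, pair_self_add, add_zero]
  show Lam p y i ab * t i ab = _
  rw [h1, h2]
  rfl

private lemma shift_indic {n : ℕ} (x : Fin n → ZMod 2) :
    shiftT x (indic x) = indic 0 := by
  funext i ab
  simp only [shiftT, indic, Pi.zero_apply]
  by_cases h : ((0:ZMod 2), (0:ZMod 2)) = ab
  · rw [if_pos h, if_pos]
    rw [← h]
    show (x i, x (nxt i)) = ((0 + x i : ZMod 2), (0 + x (nxt i) : ZMod 2))
    rw [zero_add, zero_add]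
  · rw [if_neg h, if_neg]
    intro hcon
    apply h
    have h4 := congrArg (· + ((x i, x (nxt i)) : Pair)) hcon
    have h5 : ab = 0 := by simpa [add_assoc, pair_self_add] using h4
    exact h5.symm

/-- correspondence between feasible solutions with `x^f ≠ x` and feasible
solutions with `x^r ≠ 0` preserving the cost differences. -/
theorem stmt9 {n m : ℕ} (hn : 2 ≤ n) (H : Fin m → Fin n → ZMod 2)
    (p : ℝ) (hp0 : 0 < p) (hp1 : p < 3 / 4)
    (x : Fin n → ZMod 2) (hx : x ∈ code H)
    (y : Fin n → Pair) :
    (∀ xf tf, (xf, tf) ∈ feasible H → xf ≠ emb x →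
      ∃ xr tr, (xr, tr) ∈ feasible H ∧ xr ≠ 0 ∧
        innerP (Lam p y) tf - innerP (Lam p y) (indic x) =
          innerP (Lam p (fun i => y i + (x i, x (nxt i)))) tr -
            innerP (Lam p (fun i => y i + (x i, x (nxt i)))) (indic 0)) ∧
    (∀ xr tr, (xr, tr) ∈ feasible H → xr ≠ 0 →
      ∃ xf tf, (xf, tf) ∈ feasible H ∧ xf ≠ emb x ∧
        innerP (Lam p (fun i => y i + (x i, x (nxt i)))) tr -
            innerP (Lam p (fun i => y i + (x i, x (nxt i)))) (indic 0) =
          innerP (Lam p y) tf - innerP (Lam p y) (indic x)) := by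
  have hc : ∀ j, x ∈ localCode H j := fun j => hx j
  have key : innerP (Lam p y) (indic x)
      = innerP (Lam p (fun i => y i + (x i, x (nxt i)))) (indic 0) := by
    rw [inner_shift p y x (indic x), shift_indic]
  constructor
  · intro xf tf hf hne
    refine ⟨flipR x xf, shiftT x tf, feas_map hc hf, ?_, ?_⟩
    · intro h0
      apply hne
      have := congrArg (flipR x) h0
      rw [flipR_flipR, flipR_zero] at this
      exact this
    · rw [key, inner_shift p y x tf]
  · intro xr tr hr hne
    refine ⟨flipR x xr, shiftT x tr, feas_map hc hr, ?_, ?_⟩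
    · intro h0
      apply hne
      have := congrArg (flipR x) h0
      rw [flipR_flipR, flipR_emb_self] at this
      exact this
    · rw [key, inner_shift p y x (shiftT x tr), shiftT_shiftT]
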